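/- Let A, B be positive definite n×n complex matrices with A ≤ B in the Loewner order, and let A #_{1/2} B = A^(1/2)(A^(-1/2) B A^(-1/2))^(1/2) A^(1/2), A #_{-1/2} B = A^(1/2)(A^(-1/2) B A^(-1/2))^(-1/2) A^(1/2), and S(A|B) = A^(1/2) log(A^(-1/2) B A^(-1/2)) A^(1/2). Then A - A B⁻¹ A ≤ 2(A - 2 A (A+B)⁻¹ A) ≤ S(A|B) ≤ A #_{1/2} B - A #_{-1/2} B ≤ (1/2)(B - A B⁻¹ A) ≤ B - A. -/

import Mathlib

open Matrix
open scoped ComplexOrder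

attribute [local instance] Matrix.frobeniusNormedAddCommGroup Matrix.frobeniusNormedSpace

section Aux
/-- Any function is continuous on a finite set. -/
lemma aux_continuousOn_finite {s : Set ℝ} (hs : s.Finite) (f : ℝ → ℝ) : ContinuousOn f s := by
  intro x hx
  have hopen : IsOpen ((s \ {x})ᶜ) := (hs.subset Set.diff_subset).isClosed.isOpen_compl
  have hmem : (s \ {x})ᶜ ∈ nhds x := hopen.mem_nhds (by simp)
  have h1 : nhdsWithin x s = nhdsWithin x (s ∩ (s \ {x})ᶜ) := nhdsWithin_restrict' s hmem
  have h2 : s ∩ (s \ {x})ᶜ ⊆ {x} := by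
    intro y hy
    simp only [Set.mem_inter_iff, Set.mem_compl_iff, Set.mem_diff, Set.mem_singleton_iff,
      not_and, not_not] at hy
    exact hy.2 hy.1
  unfold ContinuousWithinAt
  rw [h1]
  refine Filter.Tendsto.mono_left ?_ (nhdsWithin_mono x h2)
  rw [nhdsWithin_singleton]
  exact tendsto_pure_nhds f x

lemma aux_psd_cfc {n : Type*} [Fintype n] [DecidableEq n] {C : Matrix n n ℂ}
    (hC : C.IsHermitian) {f : ℝ → ℝ} (h : ∀ i, 0 ≤ f (hC.eigenvalues i)) :
    (cfc f C).PosSemidef := by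
  rw [hC.cfc_eq, Matrix.IsHermitian.cfc, Unitary.conjStarAlgAut_apply, Matrix.star_eq_conjTranspose]
  refine (Matrix.posSemidef_diagonal_iff.mpr ?_).mul_mul_conjTranspose_same _
  intro i
  simpa using h i

lemma aux_conj_psd {n : Type*} [Fintype n] [DecidableEq n] {S M : Matrix n n ℂ}
    (hS : S.IsHermitian) (hM : M.PosSemidef) : (S * M * S).PosSemidef := by
  have h := hM.mul_mul_conjTranspose_same S
  rwa [hS.eq] at h

lemma aux_one_le_eigenvalues {n : Type*} [Fintype n] [DecidableEq n] {C : Matrix n n ℂ}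
    (hC : C.IsHermitian) (hC1 : (C - 1).PosSemidef) (i : n) : 1 ≤ hC.eigenvalues i := by
  have h0 := hC1.re_dotProduct_nonneg ⇑(hC.eigenvectorBasis i)
  have hv : star ⇑(hC.eigenvectorBasis i) ⬝ᵥ ⇑(hC.eigenvectorBasis i) = 1 := by
    have hn := hC.eigenvectorBasis.orthonormal.1 i
    rw [dotProduct_comm]
    simp only [← EuclideanSpace.inner_eq_star_dotProduct, inner_self_eq_norm_sq_to_K, hn]
    norm_num
  rw [sub_mulVec, one_mulVec, dotProduct_sub, hv, map_sub] at h0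
  rw [hC.eigenvalues_eq i]
  simpa using h0

lemma aux_sc1 (x : ℝ) (hx : 1 ≤ x) : 1 - x⁻¹ ≤ 2*(1 - 2*(1+x)⁻¹) := by
  have hx0 : (0:ℝ) < x := by linarith
  have h1 : (0:ℝ) < 1 + x := by linarith
  rw [← sub_nonneg]
  have e : 2*(1 - 2*(1+x)⁻¹) - (1 - x⁻¹) = (x-1)^2 / (x*(1+x)) := by
    field_simp; ring
  rw [e]; positivity

lemma aux_sc2 (x : ℝ) (hx : 1 ≤ x) : 2*(1 - 2*(1+x)⁻¹) ≤ Real.log x := by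
  have key : ∀ y : ℝ, y ∈ Set.Ici (1:ℝ) →
      HasDerivAt (fun t : ℝ => Real.log t + 4*(1+t)⁻¹) (y⁻¹ + 4 * (-1 / (1+y)^2)) y := by
    intro y hy
    have hy0 : (0:ℝ) < y := lt_of_lt_of_le one_pos hy
    have h1 : HasDerivAt Real.log y⁻¹ y := Real.hasDerivAt_log (ne_of_gt hy0)
    have h2 : HasDerivAt (fun t : ℝ => 1 + t) 1 y := (hasDerivAt_id y).const_add 1
    have h3 : HasDerivAt (fun t : ℝ => (1+t)⁻¹) (-1 / (1+y)^2) y := by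
      simpa [Pi.inv_def] using h2.inv (by linarith : (1:ℝ) + y ≠ 0)
    exact h1.add (h3.const_mul 4)
  have mono : MonotoneOn (fun t : ℝ => Real.log t + 4*(1+t)⁻¹) (Set.Ici 1) := by
    apply monotoneOn_of_deriv_nonneg (convex_Ici 1)
    · intro y hy; exact (key y hy).continuousAt.continuousWithinAt
    · intro y hy; rw [interior_Ici] at hy
      exact (key y (Set.mem_Ici.mpr (le_of_lt hy))).differentiableAt.differentiableWithinAt
    · intro y hy; rw [interior_Ici] at hy
      rw [(key y (Set.mem_Ici.mpr hy.le)).deriv]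
      have hy0 : (0:ℝ) < y := lt_trans one_pos hy
      have h1 : (0:ℝ) < 1 + y := by linarith
      have e : y⁻¹ + 4 * (-1 / (1+y)^2) = (y-1)^2/(y*(1+y)^2) := by field_simp; ring
      rw [e]; positivity
  have h2 := mono (a := 1) (b := x) Set.self_mem_Ici hx hx
  simp only [Real.log_one] at h2
  norm_num at h2
  have e2 : 2*(1 - 2*(1+x)⁻¹) = 2 - 4*(1+x)⁻¹ := by ring
  linarith

lemma aux_sc3' (y : ℝ) (hy : 1 ≤ y) : 2 * Real.log y ≤ y - y⁻¹ := by
  have key : ∀ z : ℝ, z ∈ Set.Ici (1:ℝ) →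
      HasDerivAt (fun t : ℝ => t - t⁻¹ - 2*Real.log t) (1 - (-1 / z^2) - 2*z⁻¹) z := by
    intro z hz
    have hz0 : (0:ℝ) < z := lt_of_lt_of_le one_pos hz
    have h1 : HasDerivAt (fun t : ℝ => t⁻¹) (-1 / z^2) z := by
      simpa [Pi.inv_def] using (hasDerivAt_id z).inv (ne_of_gt hz0)
    exact ((hasDerivAt_id z).sub h1).sub ((Real.hasDerivAt_log (ne_of_gt hz0)).const_mul 2)
  have mono : MonotoneOn (fun t : ℝ => t - t⁻¹ - 2*Real.log t) (Set.Ici 1) := by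
    apply monotoneOn_of_deriv_nonneg (convex_Ici 1)
    · intro z hz; exact (key z hz).continuousAt.continuousWithinAt
    · intro z hz; rw [interior_Ici] at hz
      exact (key z (Set.mem_Ici.mpr (le_of_lt hz))).differentiableAt.differentiableWithinAt
    · intro z hz; rw [interior_Ici] at hz
      rw [(key z (Set.mem_Ici.mpr hz.le)).deriv]
      have hz0 : (0:ℝ) < z := lt_trans one_pos hz
      have e : 1 - (-1 / z^2) - 2*z⁻¹ = (z-1)^2/z^2 := by field_simp; ring
      rw [e]; positivity
  have h2 := mono (a := 1) (b := y) Set.self_mem_Ici hy hy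
  simp only [Real.log_one] at h2
  norm_num at h2
  linarith

lemma aux_sc3 (x : ℝ) (hx : 1 ≤ x) : Real.log x ≤ x ^ (1/2:ℝ) - x ^ (-(1/2):ℝ) := by
  have hx0 : (0:ℝ) < x := by linarith
  have hs : (1:ℝ) ≤ Real.sqrt x := by
    rw [show (1:ℝ) = Real.sqrt 1 from (Real.sqrt_one).symm]
    exact Real.sqrt_le_sqrt hx
  have h1 : x ^ (1/2:ℝ) = Real.sqrt x := (Real.sqrt_eq_rpow x).symm
  have h2 : x ^ (-(1/2):ℝ) = (Real.sqrt x)⁻¹ := by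
    rw [Real.rpow_neg hx0.le, h1]
  have hlog : Real.log x = 2 * Real.log (Real.sqrt x) := by
    rw [Real.log_sqrt hx0.le]; ring
  rw [h1, h2, hlog]
  exact aux_sc3' _ hs

lemma aux_sc4 (x : ℝ) (hx : 1 ≤ x) : x ^ (1/2:ℝ) - x ^ (-(1/2):ℝ) ≤ (x - x⁻¹)/2 := by
  have hx0 : (0:ℝ) < x := by linarith
  have hs : (1:ℝ) ≤ Real.sqrt x := by
    rw [show (1:ℝ) = Real.sqrt 1 from (Real.sqrt_one).symm]
    exact Real.sqrt_le_sqrt hx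
  have hs0 : (0:ℝ) < Real.sqrt x := by linarith
  have h1 : x ^ (1/2:ℝ) = Real.sqrt x := (Real.sqrt_eq_rpow x).symm
  have h2 : x ^ (-(1/2):ℝ) = (Real.sqrt x)⁻¹ := by
    rw [Real.rpow_neg hx0.le, h1]
  have hss : Real.sqrt x * Real.sqrt x = x := Real.mul_self_sqrt hx0.le
  set s := Real.sqrt x
  have hu : s * s⁻¹ = 1 := mul_inv_cancel₀ (ne_of_gt hs0)
  have hu1 : s⁻¹ ≤ 1 := by
    rw [← hu]; nlinarith [inv_pos.mpr hs0]
  have hinv : x⁻¹ = s⁻¹ * s⁻¹ := by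
    rw [← hss, mul_inv]
  have hf1 : 0 ≤ s - s⁻¹ := by linarith
  have hf2 : 0 ≤ s + s⁻¹ - 2 := by
    have : 0 ≤ (s - 1)^2 := sq_nonneg _
    have h3 : (s + s⁻¹ - 2) * s = (s-1)^2 := by
      have : s ≠ 0 := ne_of_gt hs0
      field_simp
      ring
    nlinarith
  rw [h1, h2, hinv, ← hss]
  nlinarith [mul_nonneg hf1 hf2]

lemma aux_sc5 (x : ℝ) (hx : 1 ≤ x) : (x - x⁻¹)/2 ≤ x - 1 := by
  have hx0 : (0:ℝ) < x := by linarith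
  rw [← sub_nonneg]
  have e : x - 1 - (x - x⁻¹)/2 = (x-1)^2/(2*x) := by field_simp; ring
  rw [e]; positivity
end Aux

/-- Matrix logarithm via the continuous functional calculus (spectral theorem). -/
noncomputable def mlog {n : Type*} [Fintype n] [DecidableEq n] (A : Matrix n n ℂ) :
    Matrix n n ℂ := cfc Real.log A

/-- Real power of a matrix via the continuous functional calculus (spectral theorem). -/
noncomputable def mpow {n : Type*} [Fintype n] [DecidableEq n] (A : Matrix n n ℂ) (r : ℝ) :
    Matrix n n ℂ := cfc (fun x : ℝ => x ^ r) A

theorem stmt_18 {n : Type*} [Fintype n] [DecidableEq n]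
    (A B : Matrix n n ℂ) (hA : A.PosDef) (hB : B.PosDef) (hAB : (B - A).PosSemidef) :
    (2 • (A - 2 • (A * (A + B)⁻¹ * A)) - (A - A * B⁻¹ * A)).PosSemidef ∧
      ((mpow A (1/2) * mlog (mpow A (-(1/2)) * B * mpow A (-(1/2))) * mpow A (1/2)) -
        2 • (A - 2 • (A * (A + B)⁻¹ * A))).PosSemidef ∧
      ((mpow A (1/2) * mpow (mpow A (-(1/2)) * B * mpow A (-(1/2))) (1/2) * mpow A (1/2) -
          mpow A (1/2) * mpow (mpow A (-(1/2)) * B * mpow A (-(1/2))) (-(1/2)) * mpow A (1/2)) -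
        (mpow A (1/2) * mlog (mpow A (-(1/2)) * B * mpow A (-(1/2))) * mpow A (1/2))).PosSemidef ∧
      (((1/2 : ℝ) • (B - A * B⁻¹ * A)) -
        (mpow A (1/2) * mpow (mpow A (-(1/2)) * B * mpow A (-(1/2))) (1/2) * mpow A (1/2) -
          mpow A (1/2) * mpow (mpow A (-(1/2)) * B * mpow A (-(1/2))) (-(1/2)) * mpow A (1/2))).PosSemidef ∧
      ((B - A) - (1/2 : ℝ) • (B - A * B⁻¹ * A)).PosSemidef := by
  have hAh : A.IsHermitian := hA.1
  have hAsa : IsSelfAdjoint A := hAh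
  have hBsa : IsSelfAdjoint B := hB.1
  have hAfin : (spectrum ℝ A).Finite := by
    rw [hAh.spectrum_real_eq_range_eigenvalues]; exact Set.finite_range _
  have cA : ∀ f : ℝ → ℝ, ContinuousOn f (spectrum ℝ A) := aux_continuousOn_finite hAfin
  have hApos : ∀ x ∈ spectrum ℝ A, (0:ℝ) < x := by
    rw [hAh.spectrum_real_eq_range_eigenvalues]; rintro x ⟨i, rfl⟩; exact hA.eigenvalues_pos i
  set S := mpow A (1/2) with hSdef
  set T := mpow A (-(1/2)) with hTdef
  have hSsa : IsSelfAdjoint S := by rw [hSdef, mpow]; exact cfc_predicate _ A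
  have hTsa : IsSelfAdjoint T := by rw [hTdef, mpow]; exact cfc_predicate _ A
  have hSh : S.IsHermitian := hSsa
  have hST : S * T = 1 := by
    rw [hSdef, hTdef, mpow, mpow, ← cfc_mul _ _ A (cA _) (cA _),
      ← cfc_const_one (R := ℝ) A hAsa]
    apply cfc_congr
    intro x hx
    have hx0 := hApos x hx
    simp only
    rw [← Real.rpow_add hx0]
    norm_num
  have hTS : T * S = 1 := by
    rw [hSdef, hTdef, mpow, mpow, ← cfc_mul _ _ A (cA _) (cA _),
      ← cfc_const_one (R := ℝ) A hAsa]
    apply cfc_congr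
    intro x hx
    have hx0 := hApos x hx
    simp only
    rw [← Real.rpow_add hx0]
    norm_num
  have hSS : S * S = A := by
    rw [hSdef, mpow, ← cfc_mul _ _ A (cA _) (cA _)]
    have h2 : cfc (id : ℝ → ℝ) A = A := cfc_id ℝ A hAsa
    conv_rhs => rw [← h2]
    apply cfc_congr
    intro x hx
    have hx0 := hApos x hx
    simp only [id]
    rw [← Real.rpow_add hx0]
    norm_num
  have hSTX : ∀ X : Matrix n n ℂ, S * (T * X) = X := fun X => by
    rw [← mul_assoc, hST, one_mul]
  have hTSX : ∀ X : Matrix n n ℂ, T * (S * X) = X := fun X => by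
    rw [← mul_assoc, hTS, one_mul]
  set C := T * B * T with hCdef
  have hCsa : IsSelfAdjoint C := by
    have h := hBsa.conjugate' T
    rwa [hTsa.star_eq] at h
  have hCh : C.IsHermitian := hCsa
  have hCfin : (spectrum ℝ C).Finite := by
    rw [hCh.spectrum_real_eq_range_eigenvalues]; exact Set.finite_range _
  have cC : ∀ f : ℝ → ℝ, ContinuousOn f (spectrum ℝ C) := aux_continuousOn_finite hCfin
  have hTAT : T * A * T = 1 := by
    rw [← hSS]
    simp only [mul_assoc]
    rw [hST, mul_one, hTS]
  have hC1 : (C - 1).PosSemidef := by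
    have h := hAB.mul_mul_conjTranspose_same T
    have e : T * (B - A) * Tᴴ = C - 1 := by
      rw [← Matrix.star_eq_conjTranspose, hTsa.star_eq, mul_sub, sub_mul, hTAT, hCdef]
    rwa [e] at h
  have hCev : ∀ i, 1 ≤ hCh.eigenvalues i := aux_one_le_eigenvalues hCh hC1
  have hCspec : ∀ x ∈ spectrum ℝ C, (1:ℝ) ≤ x := by
    rw [hCh.spectrum_real_eq_range_eigenvalues]; rintro x ⟨i, rfl⟩; exact hCev i
  -- inverse facts
  have hCCi : C * cfc (fun x : ℝ => x⁻¹) C = 1 := by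
    have h2 : cfc (id : ℝ → ℝ) C = C := cfc_id ℝ C hCsa
    nth_rewrite 1 [← h2]
    rw [← cfc_mul _ _ C (cC _) (cC _), ← cfc_const_one (R := ℝ) C hCsa]
    apply cfc_congr
    intro x hx
    have hx1 := hCspec x hx
    have hx0 : x ≠ 0 := by intro h; rw [h] at hx1; norm_num at hx1
    simp only [id]
    exact mul_inv_cancel₀ hx0
  have hBS : B = S * C * S := by
    rw [hCdef]
    simp only [mul_assoc]
    rw [hSTX, hTS, mul_one]
  have hBinv : B⁻¹ = T * cfc (fun x : ℝ => x⁻¹) C * T := by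
    apply Matrix.inv_eq_right_inv
    rw [hBS]
    simp only [mul_assoc]
    rw [hSTX, ← mul_assoc C, hCCi, one_mul, hST]
  have hABA : A * B⁻¹ * A = S * cfc (fun x : ℝ => x⁻¹) C * S := by
    rw [hBinv, ← hSS]
    simp only [mul_assoc]
    rw [hTSX, hSTX]
  have hone : cfc (fun _ : ℝ => (1:ℝ)) C = 1 := cfc_const_one ℝ C hCsa
  have h1pC : (1 + C) * cfc (fun x : ℝ => (1+x)⁻¹) C = 1 := by
    have e : cfc (fun x : ℝ => 1 + x) C = 1 + C := by
      have h := cfc_const_add (1:ℝ) (fun x : ℝ => x) C (cC _) hCsa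
      rw [cfc_id' ℝ C hCsa, _root_.map_one] at h
      exact h
    rw [← e, ← cfc_mul _ _ C (cC _) (cC _), ← cfc_const_one (R := ℝ) C hCsa]
    apply cfc_congr
    intro x hx
    have hx1 := hCspec x hx
    have hx0 : (1:ℝ) + x ≠ 0 := by intro h; nlinarith
    simp only
    exact mul_inv_cancel₀ hx0
  have hApB : A + B = S * (1 + C) * S := by
    rw [← hSS, hBS, mul_add, add_mul, mul_one]
  have hApBinv : (A + B)⁻¹ = T * cfc (fun x : ℝ => (1+x)⁻¹) C * T := by
    apply Matrix.inv_eq_right_inv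
    rw [hApB]
    simp only [mul_assoc]
    rw [hSTX, ← mul_assoc (1 + C), h1pC, one_mul, hST]
  have hAABA : A * (A + B)⁻¹ * A = S * cfc (fun x : ℝ => (1+x)⁻¹) C * S := by
    rw [hApBinv, ← hSS]
    simp only [mul_assoc]
    rw [hTSX, hSTX]
  -- master monotonicity lemma
  have master : ∀ f g : ℝ → ℝ, (∀ x : ℝ, 1 ≤ x → f x ≤ g x) →
      (S * cfc g C * S - S * cfc f C * S).PosSemidef := by
    intro f g h
    have e : S * cfc g C * S - S * cfc f C * S = S * cfc (fun x => g x - f x) C * S := by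
      rw [cfc_sub g f C (cC _) (cC _), mul_sub, sub_mul]
    rw [e]
    refine aux_conj_psd hSh (aux_psd_cfc hCh ?_)
    intro i
    exact sub_nonneg.2 (h _ (hCev i))
  -- function identities
  have hF1 : cfc (fun x : ℝ => 1 - x⁻¹) C = 1 - cfc (fun x : ℝ => x⁻¹) C := by
    have h := cfc_sub (fun _ : ℝ => (1:ℝ)) (fun x : ℝ => x⁻¹) C (cC _) (cC _)
    rw [hone] at h
    exact h
  have hF2 : cfc (fun x : ℝ => 2*(1 - 2*(1+x)⁻¹)) C
      = (2:ℝ) • (1 - (2:ℝ) • cfc (fun x : ℝ => (1+x)⁻¹) C) := by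
    have h1 := cfc_const_mul (2:ℝ) (fun x : ℝ => 1 - 2*(1+x)⁻¹) C (cC _)
    have h2 := cfc_sub (fun _ : ℝ => (1:ℝ)) (fun x : ℝ => 2*(1+x)⁻¹) C (cC _) (cC _)
    have h3 := cfc_const_mul (2:ℝ) (fun x : ℝ => (1+x)⁻¹) C (cC _)
    rw [h2, hone, h3] at h1
    exact h1
  have hF4 : cfc (fun x : ℝ => x ^ (1/2:ℝ) - x ^ (-(1/2):ℝ)) C
      = mpow C (1/2) - mpow C (-(1/2)) := by
    have h := cfc_sub (fun x : ℝ => x ^ (1/2:ℝ)) (fun x : ℝ => x ^ (-(1/2):ℝ)) C (cC _) (cC _)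
    exact h
  have hF5 : cfc (fun x : ℝ => (x - x⁻¹)/2) C
      = (1/2:ℝ) • (C - cfc (fun x : ℝ => x⁻¹) C) := by
    have h0 : cfc (fun x : ℝ => (x - x⁻¹)/2) C
        = cfc (fun x : ℝ => (1/2:ℝ) • (x - x⁻¹)) C := by
      apply cfc_congr; intro x _; simp [smul_eq_mul]; ring
    have h1 := cfc_smul (1/2:ℝ) (fun x : ℝ => x - x⁻¹) C (cC _)
    have h2 := cfc_sub (fun x : ℝ => x) (fun x : ℝ => x⁻¹) C (cC _) (cC _)
    rw [cfc_id' ℝ C hCsa] at h2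
    rw [h0, h1, h2]
  have hF6 : cfc (fun x : ℝ => x - 1) C = C - 1 := by
    have h := cfc_sub (fun x : ℝ => x) (fun _ : ℝ => (1:ℝ)) C (cC _) (cC _)
    rw [cfc_id' ℝ C hCsa, hone] at h
    exact h
  -- expression identities
  have id1 : A - A * B⁻¹ * A = S * cfc (fun x : ℝ => 1 - x⁻¹) C * S := by
    rw [hABA, ← hSS, hF1, mul_sub, sub_mul, mul_one]
  have id2 : 2 • (A - 2 • (A * (A + B)⁻¹ * A))
      = S * cfc (fun x : ℝ => 2*(1 - 2*(1+x)⁻¹)) C * S := by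
    rw [hAABA, ← hSS, hF2]
    simp only [mul_smul_comm, smul_mul_assoc, mul_sub, sub_mul, mul_one, two_smul]
    noncomm_ring
  have id4 : S * mpow C (1/2) * S - S * mpow C (-(1/2)) * S
      = S * cfc (fun x : ℝ => x ^ (1/2:ℝ) - x ^ (-(1/2):ℝ)) C * S := by
    rw [hF4, mul_sub, sub_mul]
  have id5 : (1/2 : ℝ) • (B - A * B⁻¹ * A) = S * cfc (fun x : ℝ => (x - x⁻¹)/2) C * S := by
    rw [hABA, hBS, hF5, mul_smul_comm, smul_mul_assoc, mul_sub, sub_mul]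
  have id6 : B - A = S * cfc (fun x : ℝ => x - 1) C * S := by
    rw [hBS, ← hSS, hF6, mul_sub, sub_mul, mul_one]
  refine ⟨?_, ?_, ?_, ?_, ?_⟩
  · rw [id1, id2]
    exact master _ _ aux_sc1
  · rw [id2]
    exact master _ _ aux_sc2
  · rw [id4]
    exact master _ _ aux_sc3
  · rw [id4, id5]
    exact master _ _ aux_sc4
  · rw [id5, id6]
    exact master _ _ aux_sc5
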